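/- Let ∅ ≠ A ⊆ R̃^d and u = [(u_ε)_ε] ∈ G̃(A). Then: (1) for every x̃ = [(x_ε)_ε] ∈ A, the point value u(x̃) = [(u_ε(x_ε))_ε] ∈ C̃ is well-defined, i.e., independent of the chosen representatives of u and of x̃; (2) if x̃ lies in the sharp-topology interior of A and u(ỹ) = 0 for every ỹ in some sharp neighbourhood of x̃, then ∂^α u(x̃) = 0 for every multi-index α; (3) if A is open in the sharp topology, then u = 0 in G̃(A) if and only if u(x̃) = 0 for every x̃ ∈ A. -/

import Mathlib

open Real Set Metric MeasureTheory Filter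

noncomputable section

/-- `P ε` holds for all sufficiently small `ε ∈ (0,1)`. -/
def EvSmall (P : ℝ → Prop) : Prop :=
  ∃ ε₀ : ℝ, 0 < ε₀ ∧ ε₀ < 1 ∧ ∀ ε : ℝ, 0 < ε → ε ≤ ε₀ → P ε

/-- A net `(u_ε)` with values in a seminormed group is moderate. -/
def Moderate {E : Type*} [SeminormedAddGroup E] (u : ℝ → E) : Prop :=
  ∃ N : ℕ, EvSmall fun ε => ‖u ε‖ ≤ ε ^ (-(N : ℝ))

/-- A net `(u_ε)` is negligible. -/
def Negligible {E : Type*} [SeminormedAddGroup E] (u : ℝ → E) : Prop :=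
  ∀ m : ℕ, EvSmall fun ε => ‖u ε‖ ≤ ε ^ (m : ℝ)

/-- Two nets represent the same generalized point. -/
def EqvNet {E : Type*} [SeminormedAddGroup E] (x y : ℝ → E) : Prop :=
  Negligible fun ε => x ε - y ε

/-- The set of generalized points of `Ẽ` (modelled as the moderate nets). -/
def GenPt (E : Type*) [SeminormedAddGroup E] : Set (ℝ → E) := {x | Moderate x}

/-- `x` is a representative of some generalized point belonging to `A`. -/
def IsReprOfPointOf {E : Type*} [SeminormedAddGroup E] (A : Set (ℝ → E)) (x : ℝ → E) : Prop :=
  Moderate x ∧ ∃ a ∈ A, EqvNet x a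

/-- The sharp norm `e^{-v(x)}` of a (moderate) net. -/
noncomputable def sharpNorm {E : Type*} [SeminormedAddGroup E] (x : ℝ → E) : ℝ :=
  sInf {r : ℝ | ∃ b : ℝ, r = Real.exp (-b) ∧ EvSmall fun ε => ‖x ε‖ ≤ ε ^ b}

/-- `A` is open for the sharp topology (as a set of generalized points). -/
def SharpOpen {E : Type*} [SeminormedAddGroup E] (A : Set (ℝ → E)) : Prop :=
  (∀ x ∈ A, Moderate x) ∧
  ∀ x ∈ A, ∃ r > 0, ∀ y : ℝ → E, Moderate y →
    sharpNorm (fun ε => y ε - x ε) < r → y ∈ A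

/-- `B` is a sharp neighbourhood of `A`. -/
def IsSharpNbhdOf {E : Type*} [SeminormedAddGroup E] (B A : Set (ℝ → E)) : Prop :=
  A ⊆ B ∧ ∀ x ∈ A, ∃ r > 0, ∀ y : ℝ → E, Moderate y →
    sharpNorm (fun ε => y ε - x ε) < r → y ∈ B

/-- The internal set with representative `(Aε)`. -/
def InternalSet {E : Type*} [SeminormedAddGroup E] (Aε : ℝ → Set E) : Set (ℝ → E) :=
  {x | Moderate x ∧ ∃ y : ℝ → E, EqvNet x y ∧ EvSmall fun ε => y ε ∈ Aε ε}

/-- `(Aε)` is a sharply bounded representative. -/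
def SharplyBddRep {E : Type*} [SeminormedAddGroup E] (Aε : ℝ → Set E) : Prop :=
  ∃ M : ℕ, EvSmall fun ε => ∀ x ∈ Aε ε, ‖x‖ ≤ ε ^ (-(M : ℝ))

/-- A set of generalized points is sharply bounded. -/
def SharplyBddSet {E : Type*} [SeminormedAddGroup E] (A : Set (ℝ → E)) : Prop :=
  ∃ C : ℝ, ∀ x ∈ A, sharpNorm x ≤ C

/-- The interleaved closure of a set of generalized points. -/
def interleaved {E : Type*} [SeminormedAddGroup E] (A : Set (ℝ → E)) : Set (ℝ → E) :=
  {x | ∃ (m : ℕ) (S : Fin m → Set ℝ) (y : Fin m → ℝ → E),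
    (∀ ε ∈ Set.Ioo (0:ℝ) 1, ∃! j, ε ∈ S j) ∧ (∀ j, y j ∈ A) ∧
    ∀ ε ∈ Set.Ioo (0:ℝ) 1, ∀ j, ε ∈ S j → x ε = y j ε}

/-- A net of smooth functions (smooth for each ε ∈ (0,1)). -/
def SmoothNet {V : Type*} [NormedAddCommGroup V] [NormedSpace ℝ V] (u : ℝ → V → ℂ) : Prop :=
  ∀ ε : ℝ, 0 < ε → ε < 1 → ContDiff ℝ (⊤ : ℕ∞) (u ε)

/-- The nets belonging to `E_M(A)` : all derivatives are moderate along the points of `A`. -/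
def EMod {V : Type*} [NormedAddCommGroup V] [NormedSpace ℝ V]
    (A : Set (ℝ → V)) (u : ℝ → V → ℂ) : Prop :=
  SmoothNet u ∧ ∀ (n : ℕ) (x : ℝ → V), IsReprOfPointOf A x →
    Moderate fun ε => iteratedFDeriv ℝ n (u ε) (x ε)

/-- The nets belonging to `N(A)` : all derivatives are negligible along the points of `A`. -/
def NNeg {V : Type*} [NormedAddCommGroup V] [NormedSpace ℝ V]
    (A : Set (ℝ → V)) (u : ℝ → V → ℂ) : Prop :=
  SmoothNet u ∧ ∀ (n : ℕ) (x : ℝ → V), IsReprOfPointOf A x →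
    Negligible fun ε => iteratedFDeriv ℝ n (u ε) (x ε)

/-- `u` and `v` define the same element of `G̃(A)`. -/
def GEq {V : Type*} [NormedAddCommGroup V] [NormedSpace ℝ V]
    (A : Set (ℝ → V)) (u v : ℝ → V → ℂ) : Prop :=
  NNeg A fun ε z => u ε z - v ε z

/-- `x̃ ≤ ỹ` in `R̃` (for the given representatives). -/
def RleNet (x y : ℝ → ℝ) : Prop := ∀ m : ℕ, EvSmall fun ε => x ε ≤ y ε + ε ^ (m : ℝ)

/-- `x̃ ≫ 0` in `R̃`. -/
def StrPosNet (x : ℝ → ℝ) : Prop := ∃ m : ℕ, EvSmall fun ε => ε ^ (m : ℝ) ≤ x ε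

/-- `x̃ ≪ ỹ` in `R̃`. -/
def RltlNet (x y : ℝ → ℝ) : Prop := StrPosNet fun ε => y ε - x ε

/-- The operator `∂̄ = ½(∂ₓ + i ∂_y)` on smooth functions `ℂ → ℂ`. -/
def dbar (u : ℂ → ℂ) (z : ℂ) : ℂ :=
  (fderiv ℝ u z 1 + Complex.I * fderiv ℝ u z Complex.I) / 2

/-- The iterated derivative `D^k u = ∂ₓ^k u`. -/
def Dpow : ℕ → (ℂ → ℂ) → ℂ → ℂ
  | 0, u => u
  | (k+1), u => Dpow k fun z => fderiv ℝ u z 1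

/-- `u ∈ G̃_H(A)` : generalized holomorphic functions on `A ⊆ C̃`. -/
def GHol (A : Set (ℝ → ℂ)) (u : ℝ → ℂ → ℂ) : Prop :=
  EMod A u ∧ NNeg A fun ε => dbar (u ε)

/-- A continuous, piecewise `C¹` function on `[0,1]` (with its partition). -/
structure PwC1Path where
  toFun : ℝ → ℂ
  n : ℕ
  pt : Fin (n + 1) → ℝ
  mono : Monotone pt
  first : pt 0 = 0
  last : pt (Fin.last n) = 1
  cont : ContinuousOn toFun (Set.Icc 0 1)
  piece : ∀ i : Fin n, ContDiffOn ℝ 1 toFun (Set.Icc (pt i.castSucc) (pt i.succ))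

/-- A net of piecewise `C¹` paths which is moderate for the `C¹_pw` norm. -/
def PathModerate (γ : ℝ → PwC1Path) : Prop :=
  (∃ N : ℕ, EvSmall fun ε => ∀ t ∈ Set.Icc (0:ℝ) 1, ‖(γ ε).toFun t‖ ≤ ε ^ (-(N:ℝ))) ∧
  (∃ N : ℕ, EvSmall fun ε => ∀ᵐ t ∂(volume.restrict (Set.Icc (0:ℝ) 1)),
      ‖deriv (γ ε).toFun t‖ ≤ ε ^ (-(N:ℝ)))

/-- Two nets of paths represent the same generalized path
(their difference is negligible for the `C¹_pw` norm). -/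
def PathEqv (γ γ' : ℝ → PwC1Path) : Prop :=
  ∀ m : ℕ, EvSmall fun ε =>
    (∀ t ∈ Set.Icc (0:ℝ) 1, ‖(γ ε).toFun t - (γ' ε).toFun t‖ ≤ ε ^ (m:ℝ)) ∧
    (∀ᵐ t ∂(volume.restrict (Set.Icc (0:ℝ) 1)),
      ‖deriv (γ ε).toFun t - deriv (γ' ε).toFun t‖ ≤ ε ^ (m:ℝ))

/-- `γ` is a (generalized) path in `A ⊆ C̃`. -/
def PathIn (A : Set (ℝ → ℂ)) (γ : ℝ → PwC1Path) : Prop :=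
  PathModerate γ ∧ ∀ t : ℝ → ℝ, (∀ ε, t ε ∈ Set.Icc (0:ℝ) 1) →
    IsReprOfPointOf A fun ε => (γ ε).toFun (t ε)

/-- The complex path integral `∫_γ u(z) dz` along a piecewise `C¹` path. -/
noncomputable def pathIntegral (γ : PwC1Path) (u : ℂ → ℂ) : ℂ :=
  ∑ i : Fin γ.n, ∫ t in (γ.pt i.castSucc)..(γ.pt i.succ),
    u (γ.toFun t) * derivWithin γ.toFun (Set.Icc (γ.pt i.castSucc) (γ.pt i.succ)) t

/-- The path is closed: `γ(0) = γ(1)` as generalized points. -/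
def ClosedPath (γ : ℝ → PwC1Path) : Prop :=
  Negligible fun ε => (γ ε).toFun 1 - (γ ε).toFun 0

/-- A continuous, piecewise `C¹` function on `[0,1]²` (with its grid partition). -/
structure PwC1Homotopy where
  toFun : ℝ × ℝ → ℂ
  n : ℕ
  pt : Fin (n + 1) → ℝ
  mono : Monotone pt
  first : pt 0 = 0
  last : pt (Fin.last n) = 1
  cont : ContinuousOn toFun (Set.Icc 0 1 ×ˢ Set.Icc 0 1)
  piece : ∀ i j : Fin n, ContDiffOn ℝ 1 toFun
    (Set.Icc (pt i.castSucc) (pt i.succ) ×ˢ Set.Icc (pt j.castSucc) (pt j.succ))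

/-- A moderate net of piecewise `C¹` functions on the square. -/
def HomotopyModerate (H : ℝ → PwC1Homotopy) : Prop :=
  (∃ N : ℕ, EvSmall fun ε => ∀ p ∈ (Set.Icc (0:ℝ) 1 ×ˢ Set.Icc (0:ℝ) 1),
      ‖(H ε).toFun p‖ ≤ ε ^ (-(N:ℝ))) ∧
  (∃ N : ℕ, EvSmall fun ε =>
      ∀ᵐ p ∂(volume.restrict ((Set.Icc (0:ℝ) 1 ×ˢ Set.Icc (0:ℝ) 1) : Set (ℝ × ℝ))),
      ‖fderiv ℝ (H ε).toFun p‖ ≤ ε ^ (-(N:ℝ)))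

/-- `H` is a homotopy in `A` between the closed paths `γ` and `γ'`. -/
def IsHomotopyBetween (A : Set (ℝ → ℂ)) (γ γ' : ℝ → PwC1Path)
    (H : ℝ → PwC1Homotopy) : Prop :=
  HomotopyModerate H ∧
  (∀ t : ℝ → ℝ, (∀ ε, t ε ∈ Set.Icc (0:ℝ) 1) →
    (Negligible fun ε => (H ε).toFun (t ε, 0) - (γ ε).toFun (t ε)) ∧
    (Negligible fun ε => (H ε).toFun (t ε, 1) - (γ' ε).toFun (t ε))) ∧
  (∀ s : ℝ → ℝ, (∀ ε, s ε ∈ Set.Icc (0:ℝ) 1) →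
    Negligible fun ε => (H ε).toFun (0, s ε) - (H ε).toFun (1, s ε)) ∧
  (∀ t s : ℝ → ℝ, (∀ ε, t ε ∈ Set.Icc (0:ℝ) 1) → (∀ ε, s ε ∈ Set.Icc (0:ℝ) 1) →
    IsReprOfPointOf A fun ε => (H ε).toFun (t ε, s ε))

/-! ### Auxiliary lemmas for the proof of Proposition 3.6 -/

set_option maxHeartbeats 1000000

section Aux

lemma evsmall_const {P : ℝ → Prop} (h : ∀ ε : ℝ, 0 < ε → ε < 1 → P ε) : EvSmall P :=
  ⟨1/2, by norm_num, by norm_num, fun ε hε hε' => h ε hε (lt_of_le_of_lt hε' (by norm_num))⟩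

lemma EvSmall.mono {P Q : ℝ → Prop} (h : EvSmall P)
    (himp : ∀ ε : ℝ, 0 < ε → ε < 1 → P ε → Q ε) : EvSmall Q := by
  obtain ⟨e, he, he1, hP⟩ := h
  exact ⟨e, he, he1, fun ε hε hε' => himp ε hε (lt_of_le_of_lt hε' he1) (hP ε hε hε')⟩

lemma EvSmall.and {P Q : ℝ → Prop} (hP : EvSmall P) (hQ : EvSmall Q) :
    EvSmall fun ε => P ε ∧ Q ε := by
  obtain ⟨e, he, he1, hP'⟩ := hP
  obtain ⟨e', he', he1', hQ'⟩ := hQ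
  exact ⟨min e e', lt_min he he', lt_of_le_of_lt (min_le_left _ _) he1,
    fun ε hε hε' => ⟨hP' ε hε (le_trans hε' (min_le_left _ _)),
      hQ' ε hε (le_trans hε' (min_le_right _ _))⟩⟩

lemma EvSmall.forall_fin {k : ℕ} {P : Fin k → ℝ → Prop} (h : ∀ i, EvSmall (P i)) :
    EvSmall fun ε => ∀ i, P i ε := by
  induction k with
  | zero => exact evsmall_const fun ε _ _ i => i.elim0
  | succ n ih =>
    refine ((ih fun i => h i.castSucc).and (h (Fin.last n))).mono fun ε _ _ hPQ i => ?_
    exact Fin.lastCases hPQ.2 (fun j => hPQ.1 j) i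

lemma evsmall_mul_rpow (K : ℝ) {c : ℝ} (hc : 0 < c) :
    EvSmall fun ε => K * ε ^ c ≤ 1 := by
  have hM1 : (1:ℝ) ≤ max K 1 := le_max_right _ _
  have hM0 : (0:ℝ) < max K 1 := lt_of_lt_of_le one_pos hM1
  refine ⟨min (1/2) ((max K 1)⁻¹ ^ c⁻¹),
    lt_min (by norm_num) (Real.rpow_pos_of_pos (inv_pos.2 hM0) _),
    lt_of_le_of_lt (min_le_left _ _) (by norm_num), ?_⟩
  intro ε hε hε'
  have h1 : ε ^ c ≤ ((max K 1)⁻¹ ^ c⁻¹) ^ c :=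
    Real.rpow_le_rpow hε.le (le_trans hε' (min_le_right _ _)) hc.le
  have h2 : (((max K 1)⁻¹ : ℝ) ^ c⁻¹) ^ c = (max K 1)⁻¹ := by
    rw [← Real.rpow_mul (inv_pos.2 hM0).le, inv_mul_cancel₀ hc.ne', Real.rpow_one]
  have h3 : ε ^ c ≤ (max K 1)⁻¹ := h2 ▸ h1
  calc K * ε ^ c ≤ (max K 1) * ε ^ c :=
        mul_le_mul_of_nonneg_right (le_max_left _ _) (Real.rpow_nonneg hε.le _)
    _ ≤ (max K 1) * (max K 1)⁻¹ := mul_le_mul_of_nonneg_left h3 hM0.le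
    _ = 1 := mul_inv_cancel₀ hM0.ne'

lemma mul_rpow_le' {ε K a c : ℝ} (hε : 0 < ε) (hK : 0 ≤ K) (hKc : K * ε ^ c ≤ 1) :
    K * ε ^ (a + c) ≤ ε ^ a := by
  rw [Real.rpow_add hε]
  calc K * (ε ^ a * ε ^ c) = (K * ε ^ c) * ε ^ a := by ring
    _ ≤ 1 * ε ^ a := mul_le_mul_of_nonneg_right hKc (Real.rpow_nonneg hε.le _)
    _ = ε ^ a := one_mul _

lemma negligible_of_bound {E : Type*} [SeminormedAddGroup E] (f : ℝ → E) (K : ℝ) (hK : 0 ≤ K)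
    (h : ∀ m : ℕ, EvSmall fun ε => ‖f ε‖ ≤ K * ε ^ ((m:ℝ) + 1)) : Negligible f := by
  intro m
  refine ((h m).and (evsmall_mul_rpow K one_pos)).mono fun ε hε _ hh => ?_
  exact le_trans hh.1 (mul_rpow_le' hε hK hh.2)

lemma moderate_of_bound {E : Type*} [SeminormedAddGroup E] (f : ℝ → E) (K : ℝ) (hK : 0 ≤ K)
    (N : ℕ) (h : EvSmall fun ε => ‖f ε‖ ≤ K * ε ^ (-(N:ℝ))) : Moderate f := by
  refine ⟨N + 1, (h.and (evsmall_mul_rpow K one_pos)).mono fun ε hε _ hh => ?_⟩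
  have h2 : K * ε ^ ((-(((N:ℕ)+1:ℕ)):ℝ) + 1) ≤ ε ^ (-(((N:ℕ)+1:ℕ)):ℝ) := mul_rpow_le' hε hK hh.2
  refine le_trans hh.1 (le_trans (le_of_eq ?_) h2)
  congr 1
  push_cast
  ring

lemma Negligible.of_norm_le {E F : Type*} [SeminormedAddGroup E] [SeminormedAddGroup F]
    {g : ℝ → F} (hg : Negligible g) (f : ℝ → E)
    (h : ∀ ε : ℝ, 0 < ε → ε < 1 → ‖f ε‖ ≤ ‖g ε‖) : Negligible f :=
  fun m => (hg m).mono fun ε hε hε1 hb => le_trans (h ε hε hε1) hb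

lemma Moderate.of_norm_le {E F : Type*} [SeminormedAddGroup E] [SeminormedAddGroup F]
    {g : ℝ → F} (hg : Moderate g) (f : ℝ → E)
    (h : ∀ ε : ℝ, 0 < ε → ε < 1 → ‖f ε‖ ≤ ‖g ε‖) : Moderate f := by
  obtain ⟨N, hN⟩ := hg
  exact ⟨N, hN.mono fun ε hε hε1 hb => le_trans (h ε hε hε1) hb⟩

lemma Negligible.add' {E : Type*} [SeminormedAddGroup E] {f g : ℝ → E}
    (hf : Negligible f) (hg : Negligible g) : Negligible fun ε => f ε + g ε := by
  refine negligible_of_bound _ 2 (by norm_num) fun m => ?_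
  refine ((hf (m+1)).and (hg (m+1))).mono fun ε hε hε1 hh => ?_
  have hc : (((m+1:ℕ)):ℝ) = (m:ℝ) + 1 := by push_cast; ring
  calc ‖f ε + g ε‖ ≤ ‖f ε‖ + ‖g ε‖ := norm_add_le _ _
    _ ≤ ε ^ (((m+1:ℕ)):ℝ) + ε ^ (((m+1:ℕ)):ℝ) := add_le_add hh.1 hh.2
    _ = 2 * ε ^ ((m:ℝ)+1) := by rw [hc]; ring

lemma negligible_self {E : Type*} [SeminormedAddGroup E] (w : ℝ → E) :
    Negligible fun ε => w ε - w ε :=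
  fun m => evsmall_const fun ε hε _ => by
    simpa [sub_self] using Real.rpow_nonneg hε.le (m:ℝ)

lemma sharpNorm_le {E : Type*} [SeminormedAddGroup E] {w : ℝ → E} {b : ℝ}
    (h : EvSmall fun ε => ‖w ε‖ ≤ ε ^ b) : sharpNorm w ≤ Real.exp (-b) := by
  have hbdd : BddBelow {r : ℝ | ∃ b' : ℝ, r = Real.exp (-b') ∧ EvSmall fun ε => ‖w ε‖ ≤ ε ^ b'} :=
    ⟨0, fun s hs => by obtain ⟨b', rfl, -⟩ := hs; exact (Real.exp_pos _).le⟩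
  exact csInf_le hbdd ⟨b, rfl, h⟩

lemma exists_sharp_wit {E : Type*} [SeminormedAddGroup E] {w : ℝ → E} {r : ℝ}
    (hw : Moderate w) (h : sharpNorm w < r) :
    ∃ b : ℝ, Real.exp (-b) < r ∧ EvSmall fun ε => ‖w ε‖ ≤ ε ^ b := by
  obtain ⟨N, hN⟩ := hw
  have hne : {ρ : ℝ | ∃ b : ℝ, ρ = Real.exp (-b) ∧ EvSmall fun ε => ‖w ε‖ ≤ ε ^ b}.Nonempty :=
    ⟨Real.exp (-(-(N:ℝ))), -(N:ℝ), rfl, hN⟩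
  have h' : sInf {ρ : ℝ | ∃ b : ℝ, ρ = Real.exp (-b) ∧ EvSmall fun ε => ‖w ε‖ ≤ ε ^ b} < r := h
  obtain ⟨s, hs, hlt⟩ := exists_lt_of_csInf_lt hne h'
  obtain ⟨b, rfl, hb⟩ := hs
  exact ⟨b, hlt, hb⟩

lemma sharpNorm_lt_of_negligible {E : Type*} [SeminormedAddGroup E] {w : ℝ → E}
    (hw : Negligible w) {r : ℝ} (hr : 0 < r) : sharpNorm w < r := by
  obtain ⟨m, hm⟩ := exists_nat_gt (-Real.log r)
  have h1 : Real.exp (-(m:ℝ)) < r := by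
    have h2 : (-(m:ℝ)) < Real.log r := by linarith
    calc Real.exp (-(m:ℝ)) < Real.exp (Real.log r) := Real.exp_lt_exp.2 h2
      _ = r := Real.exp_log hr
  exact lt_of_le_of_lt (sharpNorm_le (hw m)) h1

lemma coord_le_norm {d : ℕ} (v : EuclideanSpace ℝ (Fin d)) (i : Fin d) : |v i| ≤ ‖v‖ := by
  have h := abs_real_inner_le_norm (EuclideanSpace.single i (1:ℝ)) v
  rw [EuclideanSpace.inner_single_left] at h
  simpa using h

lemma opnorm_le_sum_coords {d : ℕ} {W : Type*} [NormedAddCommGroup W] [NormedSpace ℝ W]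
    (T : EuclideanSpace ℝ (Fin d) →L[ℝ] W) :
    ‖T‖ ≤ ∑ i : Fin d, ‖T (EuclideanSpace.single i (1:ℝ))‖ := by
  classical
  refine T.opNorm_le_bound (Finset.sum_nonneg fun i _ => norm_nonneg _) fun v => ?_
  have hv : ∑ i : Fin d, v i • EuclideanSpace.single i (1:ℝ) = v := by
    conv_rhs => rw [← (EuclideanSpace.basisFun (Fin d) ℝ).sum_repr v]
    exact Finset.sum_congr rfl fun i _ => by
      rw [EuclideanSpace.basisFun_repr, EuclideanSpace.basisFun_apply]
  have hTv : T v = ∑ i : Fin d, v i • T (EuclideanSpace.single i (1:ℝ)) := by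
    conv_lhs => rw [← hv]
    rw [map_sum]
    exact Finset.sum_congr rfl fun i _ => T.map_smul _ _
  rw [hTv]
  calc ‖∑ i : Fin d, v i • T (EuclideanSpace.single i (1:ℝ))‖
      ≤ ∑ i : Fin d, ‖v i • T (EuclideanSpace.single i (1:ℝ))‖ := norm_sum_le _ _
    _ = ∑ i : Fin d, |v i| * ‖T (EuclideanSpace.single i (1:ℝ))‖ := by
        simp [norm_smul, Real.norm_eq_abs]
    _ ≤ ∑ i : Fin d, ‖v‖ * ‖T (EuclideanSpace.single i (1:ℝ))‖ :=
        Finset.sum_le_sum fun i _ => mul_le_mul_of_nonneg_right (coord_le_norm v i) (norm_nonneg _)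
    _ = (∑ i : Fin d, ‖T (EuclideanSpace.single i (1:ℝ))‖) * ‖v‖ := by
        rw [← Finset.mul_sum, mul_comm]

lemma norm_sub_le_of_mem_segment' {V : Type*} [NormedAddCommGroup V] [NormedSpace ℝ V]
    {a b z : V} (hz : z ∈ segment ℝ a b) : ‖z - a‖ ≤ ‖b - a‖ := by
  obtain ⟨p, q, hp, hq, hpq, rfl⟩ := hz
  have hp' : p = 1 - q := by linarith
  subst hp'
  have h1 : (1 - q) • a + q • b - a = q • (b - a) := by
    rw [smul_sub, sub_smul, one_smul]; abel
  rw [h1, norm_smul, Real.norm_eq_abs, abs_of_nonneg hq]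
  have hq1 : q ≤ 1 := by linarith
  nlinarith [norm_nonneg (b - a)]

lemma segment_smul_subset {V : Type*} [NormedAddCommGroup V] [NormedSpace ℝ V]
    (y h : V) {s t : ℝ} (hs : 0 ≤ s) (hst : s ≤ t) (ht : 0 < t) :
    segment ℝ y (y + s • h) ⊆ segment ℝ y (y + t • h) := by
  intro w hw
  obtain ⟨p, q, hp, hq, hpq, rfl⟩ := hw
  have hp' : p = 1 - q := by linarith
  subst hp'
  have hq1 : q ≤ 1 := by linarith
  have hst1 : s / t ≤ 1 := (div_le_one ht).2 hst
  have hst0 : 0 ≤ s / t := div_nonneg hs ht.le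
  refine ⟨1 - q * (s / t), q * (s / t), ?_, mul_nonneg hq hst0, by ring, ?_⟩
  · nlinarith
  · have hqt : q * (s / t) * t = q * s := by field_simp
    have key : ∀ (α β : ℝ) (v : V), (1 - α) • y + α • (y + β • v) = y + (α * β) • v := by
      intro α β v
      rw [smul_add, sub_smul, one_smul, smul_smul]
      abel
    rw [key, key, hqt]

lemma isCompact_segment' {V : Type*} [NormedAddCommGroup V] [NormedSpace ℝ V] (a b : V) :
    IsCompact (segment ℝ a b) := by
  rw [segment_eq_image]
  exact isCompact_Icc.image (Continuous.add
    ((continuous_const.sub continuous_id).smul continuous_const)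
    (continuous_id.smul continuous_const))

lemma exists_max_segment {V : Type*} [NormedAddCommGroup V] [NormedSpace ℝ V]
    (f : V → ℝ) (hf : Continuous f) (a b : V) :
    ∃ z ∈ segment ℝ a b, ∀ w ∈ segment ℝ a b, f w ≤ f z := by
  obtain ⟨z, hz, hmax⟩ := (isCompact_segment' a b).exists_isMaxOn
    ⟨a, left_mem_segment ℝ a b⟩ hf.continuousOn
  exact ⟨z, hz, fun w hw => hmax hw⟩

lemma norm_fderiv_eq_itD1 {V W : Type*} [NormedAddCommGroup V] [NormedSpace ℝ V]
    [NormedAddCommGroup W] [NormedSpace ℝ W] (g : V → W) (v : V) :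
    ‖fderiv ℝ g v‖ = ‖iteratedFDeriv ℝ 1 g v‖ := by
  have h := norm_iteratedFDeriv_fderiv (𝕜 := ℝ) (n := 0) (f := g) (x := v)
  rw [norm_iteratedFDeriv_zero] at h
  simpa using h

lemma norm_fderiv2_eq_itD2 {V W : Type*} [NormedAddCommGroup V] [NormedSpace ℝ V]
    [NormedAddCommGroup W] [NormedSpace ℝ W] (g : V → W) (v : V) :
    ‖fderiv ℝ (fderiv ℝ g) v‖ = ‖iteratedFDeriv ℝ 2 g v‖ := by
  have h1 := norm_fderiv_eq_itD1 (fderiv ℝ g) v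
  have h2 := norm_iteratedFDeriv_fderiv (𝕜 := ℝ) (n := 1) (f := g) (x := v)
  rw [h1]
  simpa using h2

lemma ContDiff.fderiv_inf {V W : Type*} [NormedAddCommGroup V] [NormedSpace ℝ V]
    [NormedAddCommGroup W] [NormedSpace ℝ W] {g : V → W}
    (hg : ContDiff ℝ (⊤:ℕ∞) g) : ContDiff ℝ (⊤:ℕ∞) (fderiv ℝ g) :=
  (contDiff_infty_iff_fderiv.1 hg).2

lemma ContDiff.diff_inf {V W : Type*} [NormedAddCommGroup V] [NormedSpace ℝ V]
    [NormedAddCommGroup W] [NormedSpace ℝ W] {g : V → W}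
    (hg : ContDiff ℝ (⊤:ℕ∞) g) : Differentiable ℝ g :=
  (contDiff_infty_iff_fderiv.1 hg).1

end Aux

section Main

/-- Key analytic step: if the point values of a smooth moderate net vanish on a sharp ball,
then so do the values of its differential. -/
lemma step_fderiv {d : ℕ} {W : Type*} [NormedAddCommGroup W] [NormedSpace ℝ W]
    (x : ℝ → EuclideanSpace ℝ (Fin d)) (hx : Moderate x) (r : ℝ) (hr : 0 < r)
    (f : ℝ → EuclideanSpace ℝ (Fin d) → W)
    (hsm : ∀ ε : ℝ, 0 < ε → ε < 1 → ContDiff ℝ (⊤ : ℕ∞) (f ε))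
    (hmod2 : ∀ w : ℝ → EuclideanSpace ℝ (Fin d), Moderate w →
      sharpNorm (fun ε => w ε - x ε) < r → Moderate fun ε => iteratedFDeriv ℝ 2 (f ε) (w ε))
    (hval : ∀ w : ℝ → EuclideanSpace ℝ (Fin d), Moderate w →
      sharpNorm (fun ε => w ε - x ε) < r → Negligible fun ε => f ε (w ε))
    (y : ℝ → EuclideanSpace ℝ (Fin d)) (hy : Moderate y)
    (hyr : sharpNorm (fun ε => y ε - x ε) < r) :
    Negligible fun ε => fderiv ℝ (f ε) (y ε) := by
  classical
  obtain ⟨Ny, hNy⟩ := hy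
  have hyx : Moderate fun ε => y ε - x ε := by
    obtain ⟨Nx, hNx⟩ := hx
    refine moderate_of_bound _ 2 (by norm_num) (max Ny Nx) ((hNy.and hNx).mono
      fun ε hε hε1 hh => ?_)
    have e1 : ε ^ (-(Ny:ℝ)) ≤ ε ^ (-((max Ny Nx : ℕ):ℝ)) :=
      Real.rpow_le_rpow_of_exponent_ge hε hε1.le
        (neg_le_neg (Nat.cast_le.2 (le_max_left _ _)))
    have e2 : ε ^ (-(Nx:ℝ)) ≤ ε ^ (-((max Ny Nx : ℕ):ℝ)) :=
      Real.rpow_le_rpow_of_exponent_ge hε hε1.le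
        (neg_le_neg (Nat.cast_le.2 (le_max_right _ _)))
    calc ‖y ε - x ε‖ ≤ ‖y ε‖ + ‖x ε‖ := norm_sub_le _ _
      _ ≤ ε ^ (-((max Ny Nx : ℕ):ℝ)) + ε ^ (-((max Ny Nx : ℕ):ℝ)) :=
          add_le_add (le_trans hh.1 e1) (le_trans hh.2 e2)
      _ = 2 * ε ^ (-((max Ny Nx : ℕ):ℝ)) := by ring
  obtain ⟨b0, hb0r, hb0⟩ := exists_sharp_wit hyx hyr
  have hlog : 0 < b0 + Real.log r := by
    have h2 : -b0 < Real.log r := (Real.lt_log_iff_exp_lt hr).2 hb0r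
    linarith
  obtain ⟨δ, hδpos, hδ1, hδlt⟩ : ∃ δ : ℝ, 0 < δ ∧ δ ≤ 1 ∧ δ < b0 + Real.log r :=
    ⟨min ((b0 + Real.log r)/2) 1, lt_min (by linarith) one_pos, min_le_right _ _,
      lt_of_le_of_lt (min_le_left _ _) (by linarith)⟩
  set b : ℝ := b0 - δ with hbdef
  have hbr : Real.exp (-b) < r := by
    have h1 : -b < Real.log r := by rw [hbdef]; linarith
    calc Real.exp (-b) < Real.exp (Real.log r) := Real.exp_lt_exp.2 h1
      _ = r := Real.exp_log hr
  have hbδ : b + δ = b0 := by rw [hbdef]; ring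
  have hyxb : EvSmall fun ε => ‖y ε - x ε‖ ≤ ε ^ (b + δ) := by rw [hbδ]; exact hb0
  set q1 : ℕ := ⌈b⌉₊ + 1 with hq1def
  have hq1b : b + 1 ≤ (q1:ℝ) := by
    have h1 := Nat.le_ceil b
    have h2 : (q1:ℝ) = (⌈b⌉₊:ℝ) + 1 := by rw [hq1def]; push_cast; ring
    linarith
  have hq1nonneg : (0:ℝ) ≤ (q1:ℝ) := Nat.cast_nonneg _
  have hbd : b + δ ≤ (q1:ℝ) := by linarith
  have ballmem : ∀ w : ℝ → EuclideanSpace ℝ (Fin d), Moderate w →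
      (EvSmall fun ε => ‖w ε - x ε‖ ≤ ε ^ b) → sharpNorm (fun ε => w ε - x ε) < r :=
    fun w _ hwb => lt_of_le_of_lt (sharpNorm_le hwb) hbr
  -- directional negligibility
  have key : ∀ h : EuclideanSpace ℝ (Fin d), ‖h‖ ≤ 1 →
      Negligible fun ε => fderiv ℝ (f ε) (y ε) h := by
    intro h hh
    have hZex : ∀ ε : ℝ, ∃ z : EuclideanSpace ℝ (Fin d), 0 < ε → ε < 1 →
        z ∈ segment ℝ (y ε) (y ε + (ε ^ (q1:ℝ)) • h) ∧
        ∀ w ∈ segment ℝ (y ε) (y ε + (ε ^ (q1:ℝ)) • h),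
          ‖fderiv ℝ (fderiv ℝ (f ε)) w‖ ≤ ‖fderiv ℝ (fderiv ℝ (f ε)) z‖ := by
      intro ε
      by_cases hε : 0 < ε ∧ ε < 1
      · obtain ⟨z, hz1, hz2⟩ := exists_max_segment (fun v => ‖fderiv ℝ (fderiv ℝ (f ε)) v‖)
          (((hsm ε hε.1 hε.2).fderiv_inf.fderiv_inf).continuous.norm)
          (y ε) (y ε + (ε ^ (q1:ℝ)) • h)
        exact ⟨z, fun _ _ => ⟨hz1, hz2⟩⟩
      · exact ⟨y ε, fun h1 h2 => absurd ⟨h1, h2⟩ hε⟩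
    choose Z hZ using hZex
    have hZy : ∀ ε : ℝ, 0 < ε → ε < 1 → ‖Z ε - y ε‖ ≤ ε ^ (q1:ℝ) := by
      intro ε hε hε1
      have h1 := norm_sub_le_of_mem_segment (hZ ε hε hε1).1
      calc ‖Z ε - y ε‖ ≤ ‖(y ε + (ε ^ (q1:ℝ)) • h) - y ε‖ := h1
        _ = ‖(ε ^ (q1:ℝ)) • h‖ := by rw [add_sub_cancel_left]
        _ = |ε ^ (q1:ℝ)| * ‖h‖ := by rw [norm_smul, Real.norm_eq_abs]
        _ ≤ ε ^ (q1:ℝ) := by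
            rw [abs_of_nonneg (Real.rpow_nonneg hε.le _)]
            nlinarith [Real.rpow_nonneg hε.le (q1:ℝ)]
    have hone_le : ∀ ε : ℝ, 0 < ε → ε < 1 → (1:ℝ) ≤ ε ^ (-(Ny:ℝ)) := by
      intro ε hε hε1
      have h1 := Real.rpow_le_rpow_of_exponent_ge hε hε1.le
        (show -(Ny:ℝ) ≤ 0 from neg_nonpos.2 (Nat.cast_nonneg _))
      rwa [Real.rpow_zero] at h1
    have hZmod : Moderate Z := by
      refine moderate_of_bound _ 2 (by norm_num) Ny (hNy.mono fun ε hε hε1 hb' => ?_)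
      have h1 : ε ^ (q1:ℝ) ≤ 1 := Real.rpow_le_one hε.le hε1.le hq1nonneg
      have h5 : ‖Z ε‖ - ‖y ε‖ ≤ ‖Z ε - y ε‖ := norm_sub_norm_le _ _
      have h6 := hZy ε hε hε1
      have h7 := hone_le ε hε hε1
      linarith
    have hZx : EvSmall fun ε => ‖Z ε - x ε‖ ≤ ε ^ b := by
      refine (hyxb.and (evsmall_mul_rpow 2 hδpos)).mono fun ε hε hε1 hh' => ?_
      have h1 : ‖Z ε - x ε‖ ≤ ‖Z ε - y ε‖ + ‖y ε - x ε‖ := by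
        calc ‖Z ε - x ε‖ = ‖(Z ε - y ε) + (y ε - x ε)‖ := by rw [sub_add_sub_cancel]
          _ ≤ _ := norm_add_le _ _
      have h2 : ε ^ (q1:ℝ) ≤ ε ^ (b + δ) :=
        Real.rpow_le_rpow_of_exponent_ge hε hε1.le hbd
      have h3 : 2 * ε ^ (b + δ) ≤ ε ^ b := mul_rpow_le' hε (by norm_num) hh'.2
      have h4 := hZy ε hε hε1
      linarith [hh'.1]
    have hZball := ballmem Z hZmod hZx
    obtain ⟨N2, hN2⟩ := hmod2 Z hZmod hZball
    have hN2' : EvSmall fun ε => ‖fderiv ℝ (fderiv ℝ (f ε)) (Z ε)‖ ≤ ε ^ (-(N2:ℝ)) :=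
      hN2.mono fun ε hε hε1 hb' => by rw [norm_fderiv2_eq_itD2]; exact hb'
    refine negligible_of_bound _ 3 (by norm_num) fun m => ?_
    set q : ℕ := q1 + m + N2 + 1 with hqdef
    have hqq1 : (q1:ℝ) ≤ (q:ℝ) := Nat.cast_le.2 (by omega)
    have hq0 : (0:ℝ) ≤ (q:ℝ) := Nat.cast_nonneg _
    set y' : ℝ → EuclideanSpace ℝ (Fin d) := fun ε => y ε + (ε ^ (q:ℝ)) • h with hy'def
    have hy'y : ∀ ε : ℝ, 0 < ε → ε < 1 → ‖y' ε - y ε‖ ≤ ε ^ (q:ℝ) := by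
      intro ε hε hε1
      calc ‖y' ε - y ε‖ = ‖(ε ^ (q:ℝ)) • h‖ := by rw [hy'def]; rw [add_sub_cancel_left]
        _ = |ε ^ (q:ℝ)| * ‖h‖ := by rw [norm_smul, Real.norm_eq_abs]
        _ ≤ ε ^ (q:ℝ) := by
            rw [abs_of_nonneg (Real.rpow_nonneg hε.le _)]
            nlinarith [Real.rpow_nonneg hε.le (q:ℝ)]
    have hy'mod : Moderate y' := by
      refine moderate_of_bound _ 2 (by norm_num) Ny (hNy.mono fun ε hε hε1 hb' => ?_)
      have h1 : ε ^ (q:ℝ) ≤ 1 := Real.rpow_le_one hε.le hε1.le hq0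
      have h5 : ‖y' ε‖ - ‖y ε‖ ≤ ‖y' ε - y ε‖ := norm_sub_norm_le _ _
      have h6 := hy'y ε hε hε1
      have h7 := hone_le ε hε hε1
      linarith
    have hy'x : EvSmall fun ε => ‖y' ε - x ε‖ ≤ ε ^ b := by
      refine (hyxb.and (evsmall_mul_rpow 2 hδpos)).mono fun ε hε hε1 hh' => ?_
      have h1 : ‖y' ε - x ε‖ ≤ ‖y' ε - y ε‖ + ‖y ε - x ε‖ := by
        calc ‖y' ε - x ε‖ = ‖(y' ε - y ε) + (y ε - x ε)‖ := by rw [sub_add_sub_cancel]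
          _ ≤ _ := norm_add_le _ _
      have h2 : ε ^ (q:ℝ) ≤ ε ^ (b + δ) :=
        Real.rpow_le_rpow_of_exponent_ge hε hε1.le (le_trans hbd hqq1)
      have h3 : 2 * ε ^ (b + δ) ≤ ε ^ b := mul_rpow_le' hε (by norm_num) hh'.2
      have h4 := hy'y ε hε hε1
      linarith [hh'.1]
    have hy'ball := ballmem y' hy'mod hy'x
    have hvy := hval y ⟨Ny, hNy⟩ hyr (q + m + 1)
    have hvy' := hval y' hy'mod hy'ball (q + m + 1)
    refine ((hvy.and hvy').and hN2').mono fun ε hε hε1 hh' => ?_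
    obtain ⟨⟨h1, h2⟩, h3⟩ := hh'
    have hdf : ∀ v, DifferentiableAt ℝ (f ε) v :=
      fun v => ((hsm ε hε hε1).diff_inf) v
    have hdf1 : ∀ v, DifferentiableAt ℝ (fderiv ℝ (f ε)) v :=
      fun v => ((hsm ε hε hε1).fderiv_inf.diff_inf) v
    have hεqpos : 0 < ε ^ (q:ℝ) := Real.rpow_pos_of_pos hε _
    have hqsub : segment ℝ (y ε) (y' ε) ⊆ segment ℝ (y ε) (y ε + (ε ^ (q1:ℝ)) • h) := by
      have hsub := segment_smul_subset (y ε) h (s := ε ^ (q:ℝ)) (t := ε ^ (q1:ℝ))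
        hεqpos.le (Real.rpow_le_rpow_of_exponent_ge hε hε1.le hqq1)
        (Real.rpow_pos_of_pos hε _)
      simpa [hy'def] using hsub
    have hC2 : ∀ w ∈ segment ℝ (y ε) (y' ε),
        ‖fderiv ℝ (f ε) w - fderiv ℝ (f ε) (y ε)‖ ≤ ε ^ (-(N2:ℝ)) * ε ^ (q:ℝ) := by
      intro w hw
      have hmvt := (convex_segment (y ε) (y' ε)).norm_image_sub_le_of_norm_fderiv_le
        (fun v _ => hdf1 v) (fun v hv => (hZ ε hε hε1).2 v (hqsub hv))
        (left_mem_segment ℝ _ _) hw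
      have hwy : ‖w - y ε‖ ≤ ε ^ (q:ℝ) :=
        le_trans (norm_sub_le_of_mem_segment hw) (hy'y ε hε hε1)
      calc ‖fderiv ℝ (f ε) w - fderiv ℝ (f ε) (y ε)‖
          ≤ ‖fderiv ℝ (fderiv ℝ (f ε)) (Z ε)‖ * ‖w - y ε‖ := hmvt
        _ ≤ ε ^ (-(N2:ℝ)) * ε ^ (q:ℝ) :=
            mul_le_mul h3 hwy (norm_nonneg _) (Real.rpow_nonneg hε.le _)
    have hmvt2 := (convex_segment (y ε) (y' ε)).norm_image_sub_le_of_norm_fderiv_le'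
      (fun v _ => hdf v) hC2 (left_mem_segment ℝ _ _) (right_mem_segment ℝ _ _)
    have hyy' : y' ε - y ε = (ε ^ (q:ℝ)) • h := by rw [hy'def]; rw [add_sub_cancel_left]
    have eTv : ‖(fderiv ℝ (f ε) (y ε)) (y' ε - y ε)‖ = ε ^ (q:ℝ) * ‖fderiv ℝ (f ε) (y ε) h‖ := by
      rw [hyy', _root_.map_smul, norm_smul, Real.norm_eq_abs, abs_of_nonneg hεqpos.le]
    have etri : ‖(fderiv ℝ (f ε) (y ε)) (y' ε - y ε)‖ ≤
        ‖f ε (y' ε) - f ε (y ε) - (fderiv ℝ (f ε) (y ε)) (y' ε - y ε)‖ +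
          (‖f ε (y' ε)‖ + ‖f ε (y ε)‖) := by
      have e0 : (fderiv ℝ (f ε) (y ε)) (y' ε - y ε) =
          (f ε (y' ε) - f ε (y ε)) -
            (f ε (y' ε) - f ε (y ε) - (fderiv ℝ (f ε) (y ε)) (y' ε - y ε)) := by abel
      have p1 : ‖f ε (y' ε) - f ε (y ε)‖ ≤ ‖f ε (y' ε)‖ + ‖f ε (y ε)‖ := norm_sub_le _ _
      calc ‖(fderiv ℝ (f ε) (y ε)) (y' ε - y ε)‖
          = ‖(f ε (y' ε) - f ε (y ε)) -
              (f ε (y' ε) - f ε (y ε) - (fderiv ℝ (f ε) (y ε)) (y' ε - y ε))‖ := by rw [← e0]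
        _ ≤ ‖f ε (y' ε) - f ε (y ε)‖ +
              ‖f ε (y' ε) - f ε (y ε) - (fderiv ℝ (f ε) (y ε)) (y' ε - y ε)‖ := norm_sub_le _ _
        _ ≤ _ := by linarith
    have hCnn : 0 ≤ ε ^ (-(N2:ℝ)) * ε ^ (q:ℝ) :=
      mul_nonneg (Real.rpow_nonneg hε.le _) (Real.rpow_nonneg hε.le _)
    have hCle : (ε ^ (-(N2:ℝ)) * ε ^ (q:ℝ)) * ‖y' ε - y ε‖ ≤
        (ε ^ (-(N2:ℝ)) * ε ^ (q:ℝ)) * ε ^ (q:ℝ) :=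
      mul_le_mul_of_nonneg_left (hy'y ε hε hε1) hCnn
    have c1 : ε ^ (((q+m+1:ℕ)):ℝ) = ε ^ (q:ℝ) * ε ^ ((m:ℝ)+1) := by
      have hcast : (((q+m+1:ℕ)):ℝ) = (q:ℝ) + ((m:ℝ)+1) := by push_cast; ring
      rw [hcast, Real.rpow_add hε]
    have c2 : (ε ^ (-(N2:ℝ)) * ε ^ (q:ℝ)) * ε ^ (q:ℝ) ≤ ε ^ (q:ℝ) * ε ^ ((m:ℝ)+1) := by
      have e1 : (ε ^ (-(N2:ℝ)) * ε ^ (q:ℝ)) * ε ^ (q:ℝ) = ε ^ ((-(N2:ℝ)) + (q:ℝ) + (q:ℝ)) := by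
        rw [← Real.rpow_add hε, ← Real.rpow_add hε]
      have e2 : ε ^ ((-(N2:ℝ)) + (q:ℝ) + (q:ℝ)) ≤ ε ^ ((q:ℝ) + ((m:ℝ)+1)) := by
        apply Real.rpow_le_rpow_of_exponent_ge hε hε1.le
        have hq : (q:ℝ) = (q1:ℝ) + (m:ℝ) + (N2:ℝ) + 1 := by rw [hqdef]; push_cast; ring
        linarith
      calc (ε ^ (-(N2:ℝ)) * ε ^ (q:ℝ)) * ε ^ (q:ℝ) = ε ^ ((-(N2:ℝ)) + (q:ℝ) + (q:ℝ)) := e1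
        _ ≤ ε ^ ((q:ℝ) + ((m:ℝ)+1)) := e2
        _ = ε ^ (q:ℝ) * ε ^ ((m:ℝ)+1) := Real.rpow_add hε _ _
    have t1 : ‖f ε (y ε)‖ ≤ ε ^ (q:ℝ) * ε ^ ((m:ℝ)+1) := by rw [← c1]; exact h1
    have t2 : ‖f ε (y' ε)‖ ≤ ε ^ (q:ℝ) * ε ^ ((m:ℝ)+1) := by rw [← c1]; exact h2
    have main : ε ^ (q:ℝ) * ‖fderiv ℝ (f ε) (y ε) h‖ ≤
        ε ^ (q:ℝ) * (3 * ε ^ ((m:ℝ)+1)) := by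
      linarith [eTv, etri, hmvt2, hCle, c2, t1, t2]
    have hfin : ‖fderiv ℝ (f ε) (y ε) h‖ ≤ 3 * ε ^ ((m:ℝ)+1) :=
      le_of_mul_le_mul_left main hεqpos
    exact hfin
  -- combine the directions
  refine negligible_of_bound _ (d:ℝ) (Nat.cast_nonneg d) fun m => ?_
  have hkey : ∀ i : Fin d, EvSmall fun ε =>
      ‖fderiv ℝ (f ε) (y ε) (EuclideanSpace.single i (1:ℝ))‖ ≤ ε ^ (((m+1:ℕ)):ℝ) :=
    fun i => key (EuclideanSpace.single i 1) (by simp) (m+1)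
  refine (EvSmall.forall_fin hkey).mono fun ε hε hε1 hall => ?_
  have hsum := opnorm_le_sum_coords (fderiv ℝ (f ε) (y ε))
  have hc : (((m+1:ℕ)):ℝ) = (m:ℝ)+1 := by push_cast; ring
  calc ‖fderiv ℝ (f ε) (y ε)‖
      ≤ ∑ i : Fin d, ‖fderiv ℝ (f ε) (y ε) (EuclideanSpace.single i (1:ℝ))‖ := hsum
    _ ≤ ∑ _i : Fin d, ε ^ ((m:ℝ)+1) :=
        Finset.sum_le_sum fun i _ => by rw [← hc]; exact hall i
    _ = (d:ℝ) * ε ^ ((m:ℝ)+1) := by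
        simp [Finset.sum_const, Finset.card_univ, nsmul_eq_mul]

/-- Induction on the order of the derivative. -/
lemma keyind {d : ℕ} (x : ℝ → EuclideanSpace ℝ (Fin d)) (hx : Moderate x) (r : ℝ) (hr : 0 < r) :
    ∀ (n : ℕ) (W : Type) [NormedAddCommGroup W] [NormedSpace ℝ W]
      (f : ℝ → EuclideanSpace ℝ (Fin d) → W),
      (∀ ε : ℝ, 0 < ε → ε < 1 → ContDiff ℝ (⊤:ℕ∞) (f ε)) →
      (∀ (k : ℕ) (w : ℝ → EuclideanSpace ℝ (Fin d)), Moderate w →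
        sharpNorm (fun ε => w ε - x ε) < r →
        Moderate fun ε => iteratedFDeriv ℝ k (f ε) (w ε)) →
      (∀ w : ℝ → EuclideanSpace ℝ (Fin d), Moderate w →
        sharpNorm (fun ε => w ε - x ε) < r → Negligible fun ε => f ε (w ε)) →
      ∀ y : ℝ → EuclideanSpace ℝ (Fin d), Moderate y →
        sharpNorm (fun ε => y ε - x ε) < r →
        Negligible fun ε => iteratedFDeriv ℝ n (f ε) (y ε) := by
  intro n
  induction n with
  | zero =>
    intro W _ _ f hsm hk hv y hy hyr
    exact (hv y hy hyr).of_norm_le _ fun ε _ _ => by rw [norm_iteratedFDeriv_zero]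
  | succ n ih =>
    intro W _ _ f hsm hk hv y hy hyr
    have hstep : ∀ w : ℝ → EuclideanSpace ℝ (Fin d), Moderate w →
        sharpNorm (fun ε => w ε - x ε) < r →
        Negligible fun ε => fderiv ℝ (f ε) (w ε) :=
      fun w hw hwr => step_fderiv x hx r hr f hsm
        (fun w' hw' hwr' => hk 2 w' hw' hwr') hv w hw hwr
    have hres := ih (EuclideanSpace ℝ (Fin d) →L[ℝ] W) (fun ε => fderiv ℝ (f ε))
      (fun ε hε hε1 => (hsm ε hε hε1).fderiv_inf)
      (fun k w hw hwr => ((hk (k+1) w hw hwr).of_norm_le _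
        fun ε _ _ => le_of_eq norm_iteratedFDeriv_fderiv))
      hstep y hy hyr
    exact hres.of_norm_le _ fun ε _ _ => le_of_eq norm_iteratedFDeriv_fderiv.symm

/-- Mean-value transfer: the value nets of a generalized function at two representatives
of the same point differ by a negligible net. -/
lemma key_diff {d : ℕ} {W : Type*} [NormedAddCommGroup W] [NormedSpace ℝ W]
    (A : Set (ℝ → EuclideanSpace ℝ (Fin d))) (g : ℝ → EuclideanSpace ℝ (Fin d) → W)
    (hsm : ∀ ε : ℝ, 0 < ε → ε < 1 → ContDiff ℝ (⊤:ℕ∞) (g ε))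
    (hmodD : ∀ z : ℝ → EuclideanSpace ℝ (Fin d), IsReprOfPointOf A z →
      Moderate fun ε => iteratedFDeriv ℝ 1 (g ε) (z ε))
    (x y : ℝ → EuclideanSpace ℝ (Fin d)) (hx : IsReprOfPointOf A x) (hxy : EqvNet x y) :
    Negligible fun ε => g ε (x ε) - g ε (y ε) := by
  classical
  obtain ⟨hxmod, a, haA, hxa⟩ := hx
  obtain ⟨Nx, hNx⟩ := hxmod
  have hZex : ∀ ε : ℝ, ∃ z : EuclideanSpace ℝ (Fin d), 0 < ε → ε < 1 →
      z ∈ segment ℝ (x ε) (y ε) ∧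
      ∀ w ∈ segment ℝ (x ε) (y ε), ‖fderiv ℝ (g ε) w‖ ≤ ‖fderiv ℝ (g ε) z‖ := by
    intro ε
    by_cases hε : 0 < ε ∧ ε < 1
    · obtain ⟨z, hz1, hz2⟩ := exists_max_segment (fun v => ‖fderiv ℝ (g ε) v‖)
        ((hsm ε hε.1 hε.2).fderiv_inf.continuous.norm) (x ε) (y ε)
      exact ⟨z, fun _ _ => ⟨hz1, hz2⟩⟩
    · exact ⟨x ε, fun h1 h2 => absurd ⟨h1, h2⟩ hε⟩
  choose Z hZ using hZex
  have hZx : ∀ ε : ℝ, 0 < ε → ε < 1 → ‖Z ε - x ε‖ ≤ ‖y ε - x ε‖ :=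
    fun ε hε hε1 => norm_sub_le_of_mem_segment (hZ ε hε hε1).1
  have hZmod : Moderate Z := by
    refine moderate_of_bound _ 2 (by norm_num) Nx ((hNx.and (hxy 0)).mono
      fun ε hε hε1 hh => ?_)
    have h1 := hZx ε hε hε1
    have h2 : ‖y ε - x ε‖ = ‖x ε - y ε‖ := norm_sub_rev _ _
    have h4 : (1:ℝ) ≤ ε ^ (-(Nx:ℝ)) := by
      have h5 := Real.rpow_le_rpow_of_exponent_ge hε hε1.le
        (show -(Nx:ℝ) ≤ 0 from neg_nonpos.2 (Nat.cast_nonneg _))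
      rwa [Real.rpow_zero] at h5
    have h5 : ‖Z ε‖ - ‖x ε‖ ≤ ‖Z ε - x ε‖ := norm_sub_norm_le _ _
    have h6 : ‖x ε - y ε‖ ≤ 1 := by
      have h7 : ε ^ (((0:ℕ)):ℝ) = 1 := by norm_num
      rw [← h7]; exact hh.2
    linarith [hh.1]
  have hZa : EqvNet Z a := by
    refine negligible_of_bound _ 2 (by norm_num)
      fun m => ((hxy (m+1)).and (hxa (m+1))).mono fun ε hε hε1 hh => ?_
    have h1 : ‖Z ε - a ε‖ ≤ ‖Z ε - x ε‖ + ‖x ε - a ε‖ := by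
      calc ‖Z ε - a ε‖ = ‖(Z ε - x ε) + (x ε - a ε)‖ := by rw [sub_add_sub_cancel]
        _ ≤ _ := norm_add_le _ _
    have h2 : ‖Z ε - x ε‖ ≤ ‖x ε - y ε‖ := by
      rw [← norm_sub_rev (y ε)]; exact hZx ε hε hε1
    have hc : (((m+1:ℕ)):ℝ) = (m:ℝ)+1 := by push_cast; ring
    have h3 : ‖x ε - y ε‖ ≤ ε ^ ((m:ℝ)+1) := by rw [← hc]; exact hh.1
    have h4 : ‖x ε - a ε‖ ≤ ε ^ ((m:ℝ)+1) := by rw [← hc]; exact hh.2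
    linarith
  have hZrepr : IsReprOfPointOf A Z := ⟨hZmod, a, haA, hZa⟩
  obtain ⟨N, hN⟩ := hmodD Z hZrepr
  have hN' : EvSmall fun ε => ‖fderiv ℝ (g ε) (Z ε)‖ ≤ ε ^ (-(N:ℝ)) :=
    hN.mono fun ε hε hε1 hb => by rw [norm_fderiv_eq_itD1]; exact hb
  refine negligible_of_bound _ 1 (by norm_num) fun m => ?_
  refine ((hxy (m + 1 + N)).and hN').mono fun ε hε hε1 hh => ?_
  have hdg : ∀ v, DifferentiableAt ℝ (g ε) v :=
    fun v => ((hsm ε hε hε1).diff_inf) v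
  have hmvt := (convex_segment (x ε) (y ε)).norm_image_sub_le_of_norm_fderiv_le
    (fun v _ => hdg v) (fun v hv => (hZ ε hε hε1).2 v hv)
    (left_mem_segment ℝ _ _) (right_mem_segment ℝ _ _)
  have e2 : ‖y ε - x ε‖ ≤ ε ^ (((m+1+N:ℕ)):ℝ) := by
    rw [norm_sub_rev]; exact hh.1
  have e3 : ε ^ (-(N:ℝ)) * ε ^ (((m+1+N:ℕ)):ℝ) = ε ^ ((m:ℝ)+1) := by
    rw [← Real.rpow_add hε]; congr 1; push_cast; ring
  calc ‖g ε (x ε) - g ε (y ε)‖ = ‖g ε (y ε) - g ε (x ε)‖ := norm_sub_rev _ _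
    _ ≤ ‖fderiv ℝ (g ε) (Z ε)‖ * ‖y ε - x ε‖ := hmvt
    _ ≤ ε ^ (-(N:ℝ)) * ε ^ (((m+1+N:ℕ)):ℝ) :=
        mul_le_mul hh.2 e2 (norm_nonneg _) (Real.rpow_nonneg hε.le _)
    _ = ε ^ ((m:ℝ)+1) := e3
    _ = 1 * ε ^ ((m:ℝ)+1) := (one_mul _).symm

end Main

/-- Proposition 3.6: point values of generalized functions. -/
theorem pointValues_of_generalized_functions (d : ℕ)
    (A : Set (ℝ → EuclideanSpace ℝ (Fin d))) (hne : A.Nonempty)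
    (hmod : ∀ x ∈ A, Moderate x)
    (u : ℝ → EuclideanSpace ℝ (Fin d) → ℂ) (hu : EMod A u) :
    -- (1) point values are well-defined
    ((∀ x, IsReprOfPointOf A x → Moderate fun ε => u ε (x ε)) ∧
      (∀ (v : ℝ → EuclideanSpace ℝ (Fin d) → ℂ) (x y : ℝ → EuclideanSpace ℝ (Fin d)),
        EMod A v → GEq A u v → IsReprOfPointOf A x → EqvNet x y →
          Negligible fun ε => u ε (x ε) - v ε (y ε))) ∧
    -- (2) vanishing on a sharp neighbourhood of an interior point kills all derivatives there
    (∀ x : ℝ → EuclideanSpace ℝ (Fin d), Moderate x →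
      (∃ r > 0, ∀ y : ℝ → EuclideanSpace ℝ (Fin d), Moderate y →
          sharpNorm (fun ε => y ε - x ε) < r →
          y ∈ A ∧ Negligible fun ε => u ε (y ε)) →
      ∀ n : ℕ, Negligible fun ε => iteratedFDeriv ℝ n (u ε) (x ε)) ∧
    -- (3) on an open set, u = 0 iff all point values vanish
    (SharpOpen A →
      (NNeg A u ↔ ∀ x, IsReprOfPointOf A x → Negligible fun ε => u ε (x ε))) := by
  obtain ⟨hsmooth, hmodu⟩ := hu
  refine ⟨⟨?_, ?_⟩, ?_, ?_⟩
  · -- (1a) point values are moderate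
    intro x hx
    exact (hmodu 0 x hx).of_norm_le _ fun ε _ _ => by rw [norm_iteratedFDeriv_zero]
  · -- (1b) independence of representatives
    intro v x y hv hGeq hx hxy
    have n1 : Negligible fun ε => u ε (x ε) - v ε (x ε) :=
      (hGeq.2 0 x hx).of_norm_le _ fun ε _ _ => by rw [norm_iteratedFDeriv_zero]
    have n2 : Negligible fun ε => v ε (x ε) - v ε (y ε) :=
      key_diff A v hv.1 (fun z hz => hv.2 1 z hz) x y hx hxy
    have heq : (fun ε => u ε (x ε) - v ε (y ε)) =
        fun ε => (u ε (x ε) - v ε (x ε)) + (v ε (x ε) - v ε (y ε)) := by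
      funext ε; ring
    rw [heq]
    exact n1.add' n2
  · -- (2) vanishing on a sharp neighbourhood
    intro x hxmod hball n
    obtain ⟨r, hr, hb⟩ := hball
    refine keyind x hxmod r hr n ℂ u hsmooth ?_ ?_ x hxmod ?_
    · intro k w hw hwr
      exact hmodu k w ⟨hw, w, (hb w hw hwr).1, negligible_self w⟩
    · intro w hw hwr
      exact (hb w hw hwr).2
    · exact sharpNorm_lt_of_negligible (negligible_self x) hr
  · -- (3) characterisation of zero on a sharply open set
    intro hopen
    constructor
    · intro hN x hx
      exact (hN.2 0 x hx).of_norm_le _ fun ε _ _ => by rw [norm_iteratedFDeriv_zero]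
    · intro hvals
      refine ⟨hsmooth, fun n x hx => ?_⟩
      obtain ⟨hxmod, a, haA, hxa⟩ := hx
      obtain ⟨r, hr, hball⟩ := hopen.2 a haA
      have hamod : Moderate a := hopen.1 a haA
      refine keyind a hamod r hr n ℂ u hsmooth ?_ ?_ x hxmod ?_
      · intro k w hw hwr
        exact hmodu k w ⟨hw, w, hball w hw hwr, negligible_self w⟩
      · intro w hw hwr
        exact hvals w ⟨hw, w, hball w hw hwr, negligible_self w⟩
      · exact sharpNorm_lt_of_negligible hxa hr

end
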